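/- Let q be an odd prime and let p be a prime with p ≠ q. Let α be the exact power of q dividing p^{φ(q)} − 1, where φ is Euler's totient function (so α ≥ 1). Then for every integer α₁ > α and every integer u with u ≡ 1 (mod q^α), there exists an arbitrarily large integer k ≥ 1 such that p^k ≡ u (mod q^{α₁}). -/

import Mathlib

private lemma powB (qz Q e : ℤ) (hQ : qz ∣ Q) (m : ℕ) :
    qz * Q ∣ (1 + Q * e) ^ m - (1 + (m : ℤ) * e * Q) := by
  induction m with
  | zero => simp
  | succ m ih =>
    obtain ⟨c, hc⟩ := hQ
    have key : (1 + Q * e) ^ (m + 1) - (1 + ((m : ℤ) + 1) * e * Q)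
        = (1 + Q * e) * ((1 + Q * e) ^ m - (1 + (m : ℤ) * e * Q))
          + (qz * Q) * (c * e ^ 2 * (m : ℤ)) := by
      rw [hc]; ring
    push_cast
    rw [key]
    exact dvd_add (Dvd.dvd.mul_left ih _) (dvd_mul_right _ _)

theorem stmt_10 (q p : ℕ) (hq : q.Prime) (hqodd : Odd q) (hp : p.Prime)
    (hne : p ≠ q) (α : ℕ)
    (hα : q ^ α ∣ p ^ q.totient - 1 ∧ ¬ q ^ (α + 1) ∣ p ^ q.totient - 1) :
    ∀ α₁ : ℕ, α < α₁ → ∀ u : ℤ, u ≡ 1 [ZMOD (q : ℤ) ^ α] →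
      ∀ K : ℕ, ∃ k : ℕ, K ≤ k ∧ 1 ≤ k ∧ (p : ℤ) ^ k ≡ u [ZMOD (q : ℤ) ^ α₁] := by
  intro α₁ hαα₁ u hu K
  set g : ℤ := (p : ℤ) ^ q.totient with hg
  -- basic facts
  have hcop : Nat.Coprime p q := (Nat.coprime_primes hp hq).mpr hne
  have hple : 1 ≤ p ^ q.totient := Nat.one_le_pow _ _ hp.pos
  have hcast : ((p ^ q.totient - 1 : ℕ) : ℤ) = g - 1 := by
    push_cast [Nat.cast_sub hple]; ring
  have hg1 : (q : ℤ) ^ α ∣ g - 1 := by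
    rw [← hcast]
    exact_mod_cast Int.natCast_dvd_natCast.mpr hα.1
  have hg1' : ¬ (q : ℤ) ^ (α + 1) ∣ g - 1 := by
    rw [← hcast]
    intro h
    exact hα.2 (by exact_mod_cast h)
  have hqdvd : (q : ℤ) ∣ g - 1 := by
    have hnat : q ∣ p ^ q.totient - 1 :=
      (Nat.modEq_iff_dvd' hple).mp (Nat.ModEq.pow_totient hcop).symm
    rw [← hcast]
    exact_mod_cast Int.natCast_dvd_natCast.mpr hnat
  have hqg : ¬ (q : ℤ) ∣ g := by
    intro h
    have h' : q ∣ p ^ q.totient := by rw [hg] at h; exact_mod_cast h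
    exact (Nat.Prime.coprime_iff_not_dvd hq).mp hcop.symm (hq.dvd_of_dvd_pow h')
  have hα1 : 1 ≤ α := by
    rcases Nat.eq_zero_or_pos α with h | h
    · subst h
      exact absurd (by simpa using hqdvd) hg1'
    · exact h
  haveI : Fact q.Prime := ⟨hq⟩
  -- exact divisibility at each level
  have hE : ∀ t : ℕ, (q : ℤ) ^ (α + t) ∣ g ^ q ^ t - 1 ∧
      ¬ (q : ℤ) ^ (α + t + 1) ∣ g ^ q ^ t - 1 := by
    intro t
    have hm := Int.emultiplicity_pow_sub_pow hq hqodd (x := g) (y := 1) hqdvd hqg (q ^ t)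
    rw [one_pow] at hm
    have h1 : emultiplicity (q : ℤ) (g - 1) = (α : ℕ∞) :=
      emultiplicity_eq_coe.mpr ⟨hg1, hg1'⟩
    have h2 : emultiplicity q (q ^ t) = (t : ℕ∞) := emultiplicity_pow_self_of_prime hq.prime t
    rw [h1, h2, ← Nat.cast_add] at hm
    exact emultiplicity_eq_coe.mp hm
  have hudvd : (q : ℤ) ^ α ∣ u - 1 := by
    have h := Int.ModEq.dvd hu
    have := dvd_neg.mpr h
    rwa [neg_sub] at this
  -- lifting lemma
  have hmain : ∀ n : ℕ, ∀ v : ℤ, (q : ℤ) ^ α ∣ v - 1 →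
      ∃ j : ℕ, (q : ℤ) ^ (α + n) ∣ g ^ j - v := by
    intro n
    induction n with
    | zero =>
      intro v hv
      refine ⟨0, ?_⟩
      have := dvd_neg.mpr hv
      rw [neg_sub] at this
      simpa using this
    | succ n ih =>
      intro v hv
      obtain ⟨j, hj⟩ := ih v hv
      set Q : ℤ := (q : ℤ) ^ (α + n) with hQdef
      obtain ⟨d, hd⟩ := hj
      obtain ⟨e, he⟩ := (hE n).1
      have hqQ : (q : ℤ) ∣ Q := dvd_pow_self _ (by omega)
      have hqe : ¬ (q : ℤ) ∣ e := by
        rintro ⟨c, hc⟩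
        apply (hE n).2
        rw [pow_succ]
        exact ⟨c, by rw [he, hc]; ring⟩
      -- choose m solving the congruence mod q
      set dz : ZMod q := ((d : ℤ) : ZMod q) with hdz
      set ez : ZMod q := ((e : ℤ) : ZMod q) with hez
      set gz : ZMod q := ((g : ℤ) : ZMod q) ^ j with hgz
      have hez0 : ez ≠ 0 := by
        rw [hez, Ne, ZMod.intCast_zmod_eq_zero_iff_dvd]
        exact_mod_cast hqe
      have hgz0 : gz ≠ 0 := by
        apply pow_ne_zero
        rw [Ne, ZMod.intCast_zmod_eq_zero_iff_dvd]
        exact_mod_cast hqg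
      have hne0 : ez * gz ≠ 0 := mul_ne_zero hez0 hgz0
      set w : ZMod q := -dz * (ez * gz)⁻¹ with hw
      set m : ℕ := w.val with hm
      have hmw : ((m : ℕ) : ZMod q) = w := by
        rw [hm, ZMod.natCast_val, ZMod.cast_id]
      have hkey : (q : ℤ) ∣ d + (m : ℤ) * e * g ^ j := by
        rw [← ZMod.intCast_zmod_eq_zero_iff_dvd]
        push_cast
        rw [hmw, ← hdz, ← hez]
        have hcalc : w * ez * ((g : ℤ) : ZMod q) ^ j = -dz := by
          calc w * ez * gz = -dz * ((ez * gz)⁻¹ * (ez * gz)) := by rw [hw]; ring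
            _ = -dz := by rw [inv_mul_cancel₀ hne0, mul_one]
        rw [hcalc]
        ring
      refine ⟨j + m * q ^ n, ?_⟩
      have hGe : g ^ q ^ n = 1 + Q * e := by rw [← he]; ring
      have hGm : g ^ (j + m * q ^ n) = g ^ j * (1 + Q * e) ^ m := by
        rw [pow_add, mul_comm m, pow_mul, hGe]
      have hB := powB (q : ℤ) Q e hqQ m
      have hdec : g ^ j * (1 + Q * e) ^ m - v
          = g ^ j * ((1 + Q * e) ^ m - (1 + (m : ℤ) * e * Q))
            + (d + (m : ℤ) * e * g ^ j) * Q := by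
        linear_combination hd
      have hmod : (q : ℤ) ^ (α + (n + 1)) = (q : ℤ) * Q := by
        rw [hQdef]; ring
      rw [hGm, hdec, hmod]
      exact dvd_add (Dvd.dvd.mul_left hB _) (mul_dvd_mul hkey dvd_rfl)
  -- conclude
  obtain ⟨j, hj⟩ := hmain (α₁ - α) u hudvd
  have hper := (hE (α₁ - α)).1
  have hαeq : α + (α₁ - α) = α₁ := by omega
  rw [hαeq] at hj hper
  set T : ℕ := q ^ (α₁ - α) with hT
  have hT1 : 1 ≤ T := Nat.one_le_pow _ _ hq.pos
  have htot : 1 ≤ q.totient := Nat.totient_pos.mpr hq.pos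
  refine ⟨q.totient * (j + (K + 1) * T), ?_, ?_, ?_⟩
  · calc K ≤ (K + 1) * T := by nlinarith
      _ ≤ j + (K + 1) * T := by omega
      _ ≤ q.totient * (j + (K + 1) * T) := Nat.le_mul_of_pos_left _ (by omega)
  · have : 1 ≤ (K + 1) * T := Nat.mul_pos (Nat.succ_pos K) hT1
    calc 1 ≤ j + (K + 1) * T := by omega
      _ ≤ q.totient * (j + (K + 1) * T) := Nat.le_mul_of_pos_left _ (by omega)
  · have hpk : (p : ℤ) ^ (q.totient * (j + (K + 1) * T)) = g ^ (j + (K + 1) * T) := by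
      rw [hg, ← pow_mul]
    have hdvd2 : (q : ℤ) ^ α₁ ∣ (g ^ T) ^ (K + 1) - 1 := by
      refine hper.trans ?_
      have := sub_dvd_pow_sub_pow (g ^ T) 1 (K + 1)
      simpa using this
    have hfin : (q : ℤ) ^ α₁ ∣ g ^ (j + (K + 1) * T) - u := by
      have hid : g ^ (j + (K + 1) * T) - u
          = g ^ j * ((g ^ T) ^ (K + 1) - 1) + (g ^ j - u) := by
        rw [pow_add, mul_comm (K + 1), pow_mul]; ring
      rw [hid]
      exact dvd_add (Dvd.dvd.mul_left hdvd2 _) hj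
    have : (q : ℤ) ^ α₁ ∣ u - (p : ℤ) ^ (q.totient * (j + (K + 1) * T)) := by
      rw [hpk]
      have := dvd_neg.mpr hfin
      rwa [neg_sub] at this
    exact Int.modEq_iff_dvd.mpr this
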